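/- Suppose Σ_{n=1}^{∞} |1 − l_n/r_n| < ∞. Then for any non-decreasing sequence of stopping times (T_m)_{m≥1} with E[T_m] < ∞ for every m and T_m → T_∂ almost surely, the limit lim_{m→∞} E[X_{T_m}] exists and lies in (0, ∞). -/

import Mathlib

open MeasureTheory Filter Topology Finset
open scoped ENNReal NNReal Classical

/-- Partial products `t_n = (l_1 ⋯ l_n)/(r_1 ⋯ r_n)`, with `t_0 = 1`. -/
noncomputable def tp (l r : ℕ → ℝ) (n : ℕ) : ℝ :=
  (∏ i ∈ Finset.Icc 1 n, l i) / (∏ i ∈ Finset.Icc 1 n, r i)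

/-- `x_n = Σ_{i=0}^{n-1} t_i`. -/
noncomputable def xp (l r : ℕ → ℝ) (n : ℕ) : ℝ :=
  ∑ i ∈ Finset.range n, tp l r i

/-- The natural filtration of the process `X` (σ-algebra generated by `X_0, …, X_m`). -/
def natFilt {Ω : Type*} (X : ℕ → Ω → ℕ) (m : ℕ) : MeasurableSpace Ω :=
  ⨆ i ∈ Finset.range (m + 1), MeasurableSpace.comap (X i) ⊤

/-- A birth–death chain on ℕ started at `k`, with up–probabilities `r n` and
down–probabilities `l n` for states `n ≥ 1`, and `0` absorbing.  The Markov
property is encoded by conditioning on arbitrary events of the natural filtration. -/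
structure IsBDChain {Ω : Type*} [MeasurableSpace Ω] (P : Measure Ω)
    (X : ℕ → Ω → ℕ) (k : ℕ) (l r : ℕ → ℝ) : Prop where
  isProb : IsProbabilityMeasure P
  one_le_k : 1 ≤ k
  l_pos : ∀ n, 1 ≤ n → 0 < l n
  r_pos : ∀ n, 1 ≤ n → 0 < r n
  lr_one : ∀ n, 1 ≤ n → l n + r n = 1
  meas : ∀ m, Measurable (X m)
  init : ∀ᵐ ω ∂P, X 0 ω = k
  absorb : ∀ᵐ ω ∂P, ∀ m, X m ω = 0 → X (m + 1) ω = 0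
  step_up : ∀ m n, 1 ≤ n → ∀ A : Set Ω, MeasurableSet[natFilt X m] A →
    P (A ∩ {ω | X m ω = n ∧ X (m + 1) ω = n + 1}) =
      ENNReal.ofReal (r n) * P (A ∩ {ω | X m ω = n})
  step_down : ∀ m n, 1 ≤ n → ∀ A : Set Ω, MeasurableSet[natFilt X m] A →
    P (A ∩ {ω | X m ω = n ∧ X (m + 1) ω = n - 1}) =
      ENNReal.ofReal (l n) * P (A ∩ {ω | X m ω = n})

/-- A (finite-valued) stopping time for the natural filtration of `X`. -/
def IsBDStop {Ω : Type*} (X : ℕ → Ω → ℕ) (T : Ω → ℕ) : Prop :=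
  ∀ m, MeasurableSet[natFilt X m] {ω | T ω = m}

/-- An extended-ℕ-valued stopping time for the natural filtration of `X`. -/
def IsBDStopE {Ω : Type*} (X : ℕ → Ω → ℕ) (T : Ω → ℕ∞) : Prop :=
  ∀ m : ℕ, MeasurableSet[natFilt X m] {ω | T ω = (m : ℕ∞)}

/-- First hitting time of the set `S ⊆ ℕ` by the path `m ↦ X m ω`, valued in `ℕ∞`. -/
noncomputable def hitTime {Ω : Type*} (X : ℕ → Ω → ℕ) (S : Set ℕ) (ω : Ω) : ℕ∞ :=
  sInf ((fun m : ℕ => (m : ℕ∞)) '' {m | X m ω ∈ S})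

/-- `T_∂`: the first hitting time of `0`, with value `∞` if `0` is never hit. -/
noncomputable def hit0 {Ω : Type*} (X : ℕ → Ω → ℕ) (ω : Ω) : ℕ∞ :=
  hitTime X {0} ω

/-- `G_T^n`: the number of times `m` with `0 ≤ m ≤ T-1` and `X_m = n` (finite `T`). -/
def count {Ω : Type*} (X : ℕ → Ω → ℕ) (n : ℕ) (T : Ω → ℕ) (ω : Ω) : ℕ :=
  ((Finset.range (T ω)).filter fun m => X m ω = n).card

/-- `G_τ^n` for an `ℕ∞`-valued time `τ`, valued in `ℝ≥0∞`. -/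
noncomputable def countE {Ω : Type*} (X : ℕ → Ω → ℕ) (n : ℕ) (τ : Ω → ℕ∞) (ω : Ω) : ℝ≥0∞ :=
  ∑' m : ℕ, if (m : ℕ∞) < τ ω ∧ X m ω = n then 1 else 0


section Analysis
variable {l r : ℕ → ℝ}
  (hl : ∀ n, 1 ≤ n → 0 < l n) (hr : ∀ n, 1 ≤ n → 0 < r n)

lemma tp_zero : tp l r 0 = 1 := by simp [tp]

lemma tp_succ (n : ℕ) : tp l r (n + 1) = tp l r n * (l (n + 1) / r (n + 1)) := by
  unfold tp
  rw [Finset.prod_Icc_succ_top (Nat.le_add_left 1 n), Finset.prod_Icc_succ_top (Nat.le_add_left 1 n),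
    mul_div_mul_comm]

include hl hr in
lemma tp_pos (n : ℕ) : 0 < tp l r n := by
  refine div_pos (Finset.prod_pos ?_) (Finset.prod_pos ?_) <;>
    intro i hi <;> rw [Finset.mem_Icc] at hi
  · exact hl i hi.1
  · exact hr i hi.1

lemma tp_eq_prod_range (n : ℕ) : tp l r n = ∏ i ∈ Finset.range n, (l (i+1) / r (i+1)) := by
  induction n with
  | zero => simp [tp_zero]
  | succ n ih => rw [tp_succ, Finset.prod_range_succ, ih]

include hr in
lemma scale_step {n : ℕ} (hn : 1 ≤ n) (hlr : l n + r n = 1) :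
    r n * xp l r (n + 1) + l n * xp l r (n - 1) = xp l r n := by
  obtain ⟨m, rfl⟩ := Nat.exists_eq_add_of_le hn
  have h1 : xp l r (1 + m + 1) = xp l r (1 + m) + tp l r (1 + m) := by
    simp [xp, Finset.sum_range_succ]
  have h2 : xp l r (1 + m) = xp l r m + tp l r m := by
    rw [Nat.add_comm 1 m]; simp [xp, Finset.sum_range_succ]
  have h3 : 1 + m - 1 = m := by omega
  have h4 : tp l r (1 + m) = tp l r m * (l (1 + m) / r (1 + m)) := by
    rw [Nat.add_comm 1 m]; exact tp_succ m
  have hrpos := hr (1 + m) (by omega)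
  have hrt : r (1 + m) * tp l r (1 + m) = l (1 + m) * tp l r m := by
    rw [h4]; field_simp
  rw [h3, h1]
  linear_combination hrt - l (1 + m) * h2 + xp l r (1 + m) * hlr

lemma abs_log_le {x : ℝ} (hx : 1/2 ≤ x) : |Real.log x| ≤ 2 * |x - 1| := by
  have hx0 : 0 < x := by linarith
  rcases le_or_gt 1 x with h | h
  · have h1 : Real.log x ≤ x - 1 := Real.log_le_sub_one_of_pos hx0
    have h2 : 0 ≤ Real.log x := Real.log_nonneg h
    rw [abs_of_nonneg h2, abs_of_nonneg (by linarith)]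
    linarith
  · have hinv : Real.log x⁻¹ ≤ x⁻¹ - 1 := Real.log_le_sub_one_of_pos (by positivity)
    rw [Real.log_inv] at hinv
    have h2 : Real.log x ≤ 0 := Real.log_nonpos (le_of_lt hx0) (le_of_lt h)
    rw [abs_of_nonpos h2, abs_of_neg (by linarith)]
    have : x⁻¹ - 1 = (1 - x) / x := by field_simp
    rw [this] at hinv
    have : (1 - x) / x ≤ 2 * (1 - x) := by
      rw [div_le_iff₀ hx0]
      nlinarith
    linarith

include hl hr in
lemma tp_tendsto (hsum : Summable fun n : ℕ => |1 - l (n + 1) / r (n + 1)|) :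
    ∃ c : ℝ, 0 < c ∧ Tendsto (tp l r) atTop (nhds c) := by
  set u : ℕ → ℝ := fun i => l (i + 1) / r (i + 1) with hu
  have hupos : ∀ i, 0 < u i := fun i => div_pos (hl _ (by omega)) (hr _ (by omega))
  have hu1 : Tendsto (fun i => |1 - u i|) atTop (nhds 0) := hsum.tendsto_atTop_zero
  have hlog : Summable fun i => Real.log (u i) := by
    apply Summable.of_norm_bounded_eventually_nat (g := fun i => 2 * |1 - u i|) (hsum.mul_left 2)
    have : ∀ᶠ i in atTop, |1 - u i| ≤ 1/2 := hu1.eventually_le_const (by norm_num)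
    filter_upwards [this] with i hi
    have : 1/2 ≤ u i := by
      rcases abs_le.1 hi with ⟨h1, h2⟩; linarith
    calc ‖Real.log (u i)‖ = |Real.log (u i)| := rfl
      _ ≤ 2 * |u i - 1| := abs_log_le this
      _ = 2 * |1 - u i| := by rw [abs_sub_comm]
  obtain ⟨S, hS⟩ := hlog
  refine ⟨Real.exp S, Real.exp_pos S, ?_⟩
  have hpart : Tendsto (fun n => ∑ i ∈ Finset.range n, Real.log (u i)) atTop (nhds S) :=
    hS.tendsto_sum_nat
  have heq : ∀ n, tp l r n = Real.exp (∑ i ∈ Finset.range n, Real.log (u i)) := by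
    intro n
    rw [tp_eq_prod_range, Real.exp_sum]
    exact (Finset.prod_congr rfl fun i _ => (Real.exp_log (hupos i)).symm)
  rw [show tp l r = fun n => Real.exp (∑ i ∈ Finset.range n, Real.log (u i)) from funext heq]
  exact (Real.continuous_exp.tendsto S).comp hpart

end Analysis

section Bounds
variable {l r : ℕ → ℝ} {c a b : ℝ}

lemma exists_tp_bounds (hpos : ∀ n, 0 < tp l r n) (hc : 0 < c)
    (ht : Tendsto (tp l r) atTop (nhds c)) :
    ∃ a b : ℝ, 0 < a ∧ (∀ n, a ≤ tp l r n) ∧ (∀ n, tp l r n ≤ b) := by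
  have h1 : ∀ᶠ n in atTop, tp l r n ∈ Set.Icc (c/2) (c + c) :=
    ht (Icc_mem_nhds (by linarith) (by linarith))
  obtain ⟨N, hN⟩ := eventually_atTop.1 h1
  classical
  have hne : (Finset.range (N + 1)).Nonempty := ⟨0, by simp⟩
  refine ⟨min (c/2) ((Finset.range (N+1)).inf' hne (tp l r)),
    max (c + c) ((Finset.range (N+1)).sup' hne (tp l r)), ?_, ?_, ?_⟩
  · refine lt_min (by linarith) ?_
    rw [Finset.lt_inf'_iff]
    exact fun i _ => hpos i
  · intro n
    rcases le_or_gt n N with h | h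
    · exact le_trans (min_le_right _ _)
        (Finset.inf'_le _ (Finset.mem_range.2 (by omega)))
    · exact le_trans (min_le_left _ _) (hN n (by omega)).1
  · intro n
    rcases le_or_gt n N with h | h
    · exact le_trans (Finset.le_sup' _ (Finset.mem_range.2 (by omega)))
        (le_max_right _ _)
    · exact le_trans (hN n (by omega)).2 (le_max_left _ _)

lemma xp_le_mul (hb : ∀ n, tp l r n ≤ b) (n : ℕ) : xp l r n ≤ b * n := by
  calc xp l r n ≤ ∑ _i ∈ Finset.range n, b := Finset.sum_le_sum fun i _ => hb i
    _ = b * n := by rw [Finset.sum_const, Finset.card_range, nsmul_eq_mul, mul_comm]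

lemma mul_le_xp (ha : ∀ n, a ≤ tp l r n) (n : ℕ) : a * n ≤ xp l r n := by
  calc a * n = ∑ _i ∈ Finset.range n, a := by
        rw [Finset.sum_const, Finset.card_range, nsmul_eq_mul, mul_comm]
    _ ≤ xp l r n := Finset.sum_le_sum fun i _ => ha i

noncomputable def Gd (l r : ℕ → ℝ) (c : ℝ) (n : ℕ) : ℝ := ∑ i ∈ Finset.range n, |c - tp l r i|

lemma Gd_nonneg (n : ℕ) : 0 ≤ Gd l r c n :=
  Finset.sum_nonneg fun i _ => abs_nonneg _

lemma abs_sub_xp_le (n : ℕ) : |c * n - xp l r n| ≤ Gd l r c n := by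
  have : c * n - xp l r n = ∑ i ∈ Finset.range n, (c - tp l r i) := by
    rw [Finset.sum_sub_distrib, Finset.sum_const, Finset.card_range, nsmul_eq_mul, mul_comm]
    rfl
  rw [this]
  exact Finset.abs_sum_le_sum_abs _ _

lemma Gd_small (hc : 0 < c) (ha : 0 < a) (ha' : ∀ n, a ≤ tp l r n)
    (ht : Tendsto (tp l r) atTop (nhds c)) :
    ∀ ε : ℝ, 0 < ε → ∃ N, ∀ n ≥ N, Gd l r c n ≤ ε * xp l r n := by
  intro ε hε
  have h0 : Tendsto (fun i => |c - tp l r i|) atTop (nhds 0) := by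
    have := ht.const_sub c
    rw [sub_self] at this
    simpa using this.abs
  have hces : Tendsto (fun n : ℕ => (n : ℝ)⁻¹ * Gd l r c n) atTop (nhds 0) :=
    Filter.Tendsto.cesaro h0
  have h1 : ∀ᶠ n : ℕ in atTop, (n : ℝ)⁻¹ * Gd l r c n ≤ ε * a :=
    hces.eventually_le_const (by positivity)
  obtain ⟨N, hN⟩ := eventually_atTop.1 h1
  refine ⟨N + 1, fun n hn => ?_⟩
  have hn0 : 0 < (n : ℝ) := by exact_mod_cast Nat.lt_of_lt_of_le (by omega) hn
  have h2 := hN n (by omega)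
  calc Gd l r c n = (n : ℝ) * ((n : ℝ)⁻¹ * Gd l r c n) := by field_simp
    _ ≤ (n : ℝ) * (ε * a) := by
        exact mul_le_mul_of_nonneg_left h2 (le_of_lt hn0)
    _ = ε * (a * n) := by ring
    _ ≤ ε * xp l r n := by
        exact mul_le_mul_of_nonneg_left (mul_le_xp ha' n) (le_of_lt hε)

end Bounds

section Basics
variable {Ω : Type*} [MeasurableSpace Ω] {X : ℕ → Ω → ℕ}

lemma natFilt_mono {m m' : ℕ} (h : m ≤ m') : natFilt X m ≤ natFilt X m' := by
  unfold natFilt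
  refine biSup_mono fun i hi => Finset.mem_range.2 ?_
  have := Finset.mem_range.1 hi
  omega

lemma natFilt_le (hX : ∀ i, Measurable (X i)) (m : ℕ) :
    natFilt X m ≤ ‹MeasurableSpace Ω› := by
  refine iSup₂_le fun i _ => ?_
  intro s hs
  obtain ⟨s', -, rfl⟩ := hs
  exact hX i (by trivial)

lemma measurableSet_X_eq (m i n : ℕ) (h : i ≤ m) :
    MeasurableSet[natFilt X m] {ω | X i ω = n} := by
  have h1 : MeasurableSpace.comap (X i) ⊤ ≤ natFilt X m := by
    unfold natFilt
    have hi : i ∈ Finset.range (m + 1) := Finset.mem_range.2 (by omega)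
    exact le_biSup (fun j => MeasurableSpace.comap (X j) ⊤) hi
  exact h1 _ ⟨{n}, trivial, rfl⟩

lemma measurableSet_stop_gt {T : Ω → ℕ} (hT : IsBDStop X T) (m : ℕ) :
    MeasurableSet[natFilt X m] {ω | m < T ω} := by
  have : {ω | m < T ω} = (⋃ j : Fin (m+1), {ω | T ω = j})ᶜ := by
    ext ω
    simp only [Set.mem_setOf_eq, Set.mem_compl_iff, Set.mem_iUnion]
    constructor
    · rintro h ⟨j, hj⟩
      have := j.2
      omega
    · intro h
      by_contra hc
      exact h ⟨⟨T ω, by omega⟩, rfl⟩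
  rw [this]
  exact (MeasurableSet.iUnion fun (j : Fin (m + 1)) =>
    natFilt_mono (Nat.lt_succ_iff.mp j.isLt) _ (hT (j : ℕ))).compl

/-- Good paths. -/
def GoodPath (X : ℕ → Ω → ℕ) (k : ℕ) (ω : Ω) : Prop :=
  X 0 ω = k ∧ (∀ m, X m ω = 0 → X (m + 1) ω = 0) ∧
    (∀ m n, 1 ≤ n → X m ω = n → X (m + 1) ω = n + 1 ∨ X (m + 1) ω = n - 1)

variable {P : Measure Ω} {k : ℕ} {l r : ℕ → ℝ}

lemma ae_goodPath (hC : IsBDChain P X k l r) : ∀ᵐ ω ∂P, GoodPath X k ω := by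
  have hP := hC.isProb
  have hstep : ∀ m n : ℕ, 1 ≤ n → ∀ᵐ ω ∂P,
      X m ω = n → X (m + 1) ω = n + 1 ∨ X (m + 1) ω = n - 1 := by
    intro m n hn
    set U : Set Ω := {ω | X m ω = n ∧ X (m + 1) ω = n + 1} with hU
    set D : Set Ω := {ω | X m ω = n ∧ X (m + 1) ω = n - 1} with hD
    set S : Set Ω := {ω | X m ω = n} with hS
    have hmU : MeasurableSet U :=
      ((hC.meas m (by trivial : MeasurableSet {n})).inter
        (hC.meas (m+1) (by trivial : MeasurableSet {n+1})))
    have hmD : MeasurableSet D :=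
      ((hC.meas m (by trivial : MeasurableSet {n})).inter
        (hC.meas (m+1) (by trivial : MeasurableSet {n-1})))
    have hmS : MeasurableSet S := hC.meas m (by trivial : MeasurableSet {n})
    have hPU : P U = ENNReal.ofReal (r n) * P S := by
      have := hC.step_up m n hn Set.univ MeasurableSet.univ
      simpa [hU, hS] using this
    have hPD : P D = ENNReal.ofReal (l n) * P S := by
      have := hC.step_down m n hn Set.univ MeasurableSet.univ
      simpa [hD, hS] using this
    have hdisj : Disjoint U D := by
      rw [Set.disjoint_left]
      rintro ω ⟨h1, h2⟩ ⟨h3, h4⟩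
      omega
    have hsub : U ∪ D ⊆ S := by
      rintro ω (⟨h1, -⟩ | ⟨h1, -⟩) <;> exact h1
    have hPUD : P (U ∪ D) = P S := by
      rw [measure_union hdisj hmD, hPU, hPD, ← add_mul, ← ENNReal.ofReal_add
        (le_of_lt (hC.r_pos n hn)) (le_of_lt (hC.l_pos n hn))]
      rw [show r n + l n = 1 by linarith [hC.lr_one n hn]]
      simp
    have hnull : P (S \ (U ∪ D)) = 0 := by
      rw [measure_diff hsub (hmU.union hmD).nullMeasurableSet (measure_ne_top P _), hPUD,
        tsub_self]
    rw [ae_iff]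
    refine measure_mono_null ?_ hnull
    intro ω hω
    simp only [Set.mem_setOf_eq, Classical.not_imp, not_or] at hω
    refine ⟨hω.1, ?_⟩
    rintro (⟨-, h⟩ | ⟨-, h⟩)
    · exact hω.2.1 h
    · exact hω.2.2 h
  have h3 : ∀ᵐ ω ∂P, ∀ m n, 1 ≤ n → X m ω = n →
      X (m + 1) ω = n + 1 ∨ X (m + 1) ω = n - 1 := by
    refine ae_all_iff.2 fun m => ae_all_iff.2 fun n => ?_
    by_cases hn : 1 ≤ n
    · exact (hstep m n hn).mono fun ω h _ => h
    · exact Filter.Eventually.of_forall fun ω hn' => absurd hn' hn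
  filter_upwards [hC.init, hC.absorb, h3] with ω h1 h2 h3
  exact ⟨h1, h2, h3⟩

end Basics

section Good
variable {Ω : Type*} {X : ℕ → Ω → ℕ} {k : ℕ} {ω : Ω}

lemma GoodPath.le_succ (hg : GoodPath X k ω) (m : ℕ) : X (m + 1) ω ≤ X m ω + 1 := by
  rcases Nat.eq_zero_or_pos (X m ω) with h | h
  · rw [hg.2.1 m h]; omega
  · rcases hg.2.2 m (X m ω) h rfl with h' | h' <;> omega

lemma GoodPath.le_add (hg : GoodPath X k ω) (m : ℕ) : X m ω ≤ k + m := by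
  induction m with
  | zero => rw [hg.1]; omega
  | succ m ih => have := hg.le_succ m; omega

lemma GoodPath.absorb_le (hg : GoodPath X k ω) {i m : ℕ} (h : i ≤ m) (h0 : X i ω = 0) :
    X m ω = 0 := by
  obtain ⟨d, rfl⟩ := Nat.exists_eq_add_of_le h
  clear h
  induction d with
  | zero => exact h0
  | succ d ih => exact hg.2.1 _ ih

end Good

section MeasHelpers
variable {Ω : Type*} [MeasurableSpace Ω] {X : ℕ → Ω → ℕ}

lemma measurable_stopped (hX : ∀ i, Measurable (X i)) {f : Ω → ℕ} (hf : Measurable f) :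
    Measurable fun ω => X (f ω) ω := by
  refine measurable_to_countable' fun n => ?_
  have h : (fun ω => X (f ω) ω) ⁻¹' {n} = ⋃ m, f ⁻¹' {m} ∩ X m ⁻¹' {n} := by
    ext ω
    simp only [Set.mem_preimage, Set.mem_singleton_iff, Set.mem_iUnion, Set.mem_inter_iff]
    constructor
    · intro hh; exact ⟨f ω, rfl, hh⟩
    · rintro ⟨m, rfl, hh⟩; exact hh
  rw [h]
  exact MeasurableSet.iUnion fun m =>
    (hf (MeasurableSet.singleton m)).inter (hX m (MeasurableSet.singleton n))

lemma IsBDStop.measurable (hX : ∀ i, Measurable (X i)) {T : Ω → ℕ} (hT : IsBDStop X T) :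
    Measurable T :=
  measurable_to_countable' fun n => natFilt_le hX n _ (hT n)

lemma setLIntegral_comp_eq_tsum (hX : ∀ i, Measurable (X i)) (g : ℕ → ℝ≥0∞) (m : ℕ)
    {B : Set Ω} (hB : MeasurableSet B) (P : Measure Ω) :
    ∫⁻ ω in B, g (X m ω) ∂P = ∑' n, g n * P (B ∩ {ω | X m ω = n}) := by
  have hmeas : ∀ n : ℕ, MeasurableSet {ω | X m ω = n} := fun n =>
    hX m (MeasurableSet.singleton n)
  have h1 : ∀ ω, g (X m ω) = ∑' n, Set.indicator {ω' | X m ω' = n} (fun _ => g n) ω := by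
    intro ω
    rw [tsum_eq_single (X m ω) ?_]
    · rw [Set.indicator_of_mem (by exact rfl)]
    · intro n hn
      rw [Set.indicator_of_notMem]
      exact fun hc => hn (by exact hc.symm ▸ rfl)
  simp_rw [h1]
  rw [lintegral_tsum fun n => (measurable_const.indicator (hmeas n)).aemeasurable]
  refine tsum_congr fun n => ?_
  rw [lintegral_indicator (hmeas n), setLIntegral_const, Measure.restrict_apply (hmeas n),
    Set.inter_comm]

end MeasHelpers

section Chain
variable {Ω : Type*} [MeasurableSpace Ω] {P : Measure Ω} {X : ℕ → Ω → ℕ} {k : ℕ} {l r : ℕ → ℝ}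
variable (hC : IsBDChain P X k l r)

include hC

lemma step_lintegral (g : ℕ → ℝ≥0∞) (m n : ℕ) (hn : 1 ≤ n)
    {B : Set Ω} (hBf : MeasurableSet[natFilt X m] B) :
    ∫⁻ ω in B ∩ {ω | X m ω = n}, g (X (m + 1) ω) ∂P =
      (ENNReal.ofReal (r n) * g (n + 1) + ENNReal.ofReal (l n) * g (n - 1)) *
        P (B ∩ {ω | X m ω = n}) := by
  have hX := hC.meas
  have hB : MeasurableSet B := natFilt_le hX m _ hBf
  have hS : MeasurableSet (B ∩ {ω | X m ω = n}) :=
    hB.inter (hX m (MeasurableSet.singleton n))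
  rw [setLIntegral_comp_eq_tsum hX g (m + 1) hS P]
  have hgood : P {ω | ¬ GoodPath X k ω} = 0 := by
    have := ae_goodPath hC; rwa [ae_iff] at this
  have hnull : ∀ n' : ℕ, n' ∉ ({n - 1, n + 1} : Finset ℕ) →
      g n' * P ((B ∩ {ω | X m ω = n}) ∩ {ω | X (m + 1) ω = n'}) = 0 := by
    intro n' hn'
    simp only [Finset.mem_insert, Finset.mem_singleton] at hn'
    push_neg at hn'
    have h0 : P ((B ∩ {ω | X m ω = n}) ∩ {ω | X (m + 1) ω = n'}) = 0 := by
      refine measure_mono_null ?_ hgood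
      rintro ω ⟨⟨-, h1⟩, h2⟩
      simp only [Set.mem_setOf_eq] at h1 h2 ⊢
      intro hgd
      rcases hgd.2.2 m n hn h1 with h | h <;> omega
    rw [h0, mul_zero]
  rw [tsum_eq_sum hnull]
  have hne : (n - 1) ≠ (n + 1) := by omega
  rw [Finset.sum_pair hne]
  have hup : (B ∩ {ω | X m ω = n}) ∩ {ω | X (m + 1) ω = n + 1} =
      B ∩ {ω | X m ω = n ∧ X (m + 1) ω = n + 1} := by
    ext ω; simp only [Set.mem_inter_iff, Set.mem_setOf_eq]; tauto
  have hdn : (B ∩ {ω | X m ω = n}) ∩ {ω | X (m + 1) ω = n - 1} =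
      B ∩ {ω | X m ω = n ∧ X (m + 1) ω = n - 1} := by
    ext ω; simp only [Set.mem_inter_iff, Set.mem_setOf_eq]; tauto
  rw [hup, hdn, hC.step_up m n hn B hBf, hC.step_down m n hn B hBf]
  ring

lemma step_lintegral_zero (g : ℕ → ℝ≥0∞) (m : ℕ)
    {B : Set Ω} (hB : MeasurableSet B) :
    ∫⁻ ω in B ∩ {ω | X m ω = 0}, g (X (m + 1) ω) ∂P =
      g 0 * P (B ∩ {ω | X m ω = 0}) := by
  have hX := hC.meas
  have hS : MeasurableSet (B ∩ {ω | X m ω = 0}) :=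
    hB.inter (hX m (MeasurableSet.singleton 0))
  rw [setLIntegral_comp_eq_tsum hX g (m + 1) hS P]
  have hgood : P {ω | ¬ GoodPath X k ω} = 0 := by
    have := ae_goodPath hC; rwa [ae_iff] at this
  rw [tsum_eq_single 0 ?_]
  · congr 1
    refine measure_congr ?_
    unfold Filter.EventuallyEq; rw [ae_iff]
    refine measure_mono_null ?_ hgood
    intro ω hω
    simp only [Set.mem_setOf_eq, Set.mem_inter_iff, eq_iff_iff] at hω ⊢
    intro hgd
    apply hω
    constructor
    · rintro ⟨⟨hB1, h1⟩, -⟩; exact ⟨hB1, h1⟩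
    · rintro ⟨hB1, h1⟩
      exact ⟨⟨hB1, h1⟩, hgd.2.1 m h1⟩
  · intro n' hn'
    have h0 : P ((B ∩ {ω | X m ω = 0}) ∩ {ω | X (m + 1) ω = n'}) = 0 := by
      refine measure_mono_null ?_ hgood
      rintro ω ⟨⟨-, h1⟩, h2⟩
      simp only [Set.mem_setOf_eq] at h1 h2 ⊢
      intro hgd
      exact hn' (h2.symm.trans (hgd.2.1 m h1))
    rw [h0, mul_zero]
end Chain


section Key
variable {Ω : Type*} [MeasurableSpace Ω] {P : Measure Ω} {X : ℕ → Ω → ℕ} {k : ℕ} {l r : ℕ → ℝ}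
variable (hC : IsBDChain P X k l r)
include hC

lemma xp_nonneg' (n : ℕ) : 0 ≤ xp l r n :=
  Finset.sum_nonneg fun i _ => le_of_lt (tp_pos hC.l_pos hC.r_pos i)

lemma key1 {T : Ω → ℕ} (hT : IsBDStop X T) (m : ℕ) :
    ∫⁻ ω, ENNReal.ofReal (xp l r (X (min (T ω) m) ω)) ∂P = ENNReal.ofReal (xp l r k) := by
  have hX := hC.meas
  have hP := hC.isProb
  induction m with
  | zero =>
    simp only [Nat.min_zero]
    rw [lintegral_congr_ae (hC.init.mono fun ω h => by rw [h])]
    simp [lintegral_const]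
  | succ m ih =>
    rw [← ih]
    set B := {ω | m < T ω} with hBdef
    have hBf : MeasurableSet[natFilt X m] B := measurableSet_stop_gt hT m
    have hB : MeasurableSet B := natFilt_le hX m _ hBf
    rw [← lintegral_add_compl (fun ω => ENNReal.ofReal (xp l r (X (min (T ω) (m+1)) ω))) hB,
        ← lintegral_add_compl (fun ω => ENNReal.ofReal (xp l r (X (min (T ω) m) ω))) hB]
    have ec : ∫⁻ ω in Bᶜ, ENNReal.ofReal (xp l r (X (min (T ω) (m+1)) ω)) ∂P
        = ∫⁻ ω in Bᶜ, ENNReal.ofReal (xp l r (X (min (T ω) m) ω)) ∂P := by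
      refine setLIntegral_congr_fun hB.compl (fun ω hω => ?_)
      have hTω : T ω ≤ m := by simpa [hBdef] using hω
      rw [min_eq_left hTω, min_eq_left (by omega : T ω ≤ m + 1)]
    rw [ec]
    congr 1
    have e1 : ∫⁻ ω in B, ENNReal.ofReal (xp l r (X (min (T ω) (m+1)) ω)) ∂P
        = ∫⁻ ω in B, ENNReal.ofReal (xp l r (X (m+1) ω)) ∂P := by
      refine setLIntegral_congr_fun hB (fun ω hω => ?_)
      have hTω : m < T ω := hω
      rw [min_eq_right (by omega : m + 1 ≤ T ω)]
    have e2 : ∫⁻ ω in B, ENNReal.ofReal (xp l r (X (min (T ω) m) ω)) ∂P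
        = ∫⁻ ω in B, ENNReal.ofReal (xp l r (X m ω)) ∂P := by
      refine setLIntegral_congr_fun hB (fun ω hω => ?_)
      have hTω : m < T ω := hω
      rw [min_eq_right (by omega : m ≤ T ω)]
    rw [e1, e2]
    have hpart : B = ⋃ n : ℕ, B ∩ {ω | X m ω = n} := by
      ext ω
      simp only [Set.mem_iUnion, Set.mem_inter_iff, Set.mem_setOf_eq]
      exact ⟨fun h => ⟨X m ω, h, rfl⟩, fun ⟨n, h, _⟩ => h⟩
    have hmeasn : ∀ n : ℕ, MeasurableSet (B ∩ {ω | X m ω = n}) := fun n =>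
      hB.inter (hX m (MeasurableSet.singleton n))
    have hdisj : Pairwise (Function.onFun Disjoint fun n : ℕ => B ∩ {ω | X m ω = n}) := by
      intro n n' hnn'
      simp only [Function.onFun]
      rw [Set.disjoint_left]
      rintro ω ⟨-, h1⟩ ⟨-, h2⟩
      exact hnn' ((h1 : X m ω = n).symm.trans h2)
    rw [setLIntegral_comp_eq_tsum hX (fun n => ENNReal.ofReal (xp l r n)) m hB P]
    rw [show ∫⁻ ω in B, ENNReal.ofReal (xp l r (X (m+1) ω)) ∂P
        = ∫⁻ ω in ⋃ n : ℕ, B ∩ {ω | X m ω = n}, ENNReal.ofReal (xp l r (X (m+1) ω)) ∂P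
      from by rw [← hpart]]
    rw [lintegral_iUnion hmeasn hdisj]
    refine tsum_congr fun n => ?_
    rcases Nat.eq_zero_or_pos n with rfl | hn
    · exact step_lintegral_zero hC (fun n => ENNReal.ofReal (xp l r n)) m hB
    · rw [step_lintegral hC (fun n => ENNReal.ofReal (xp l r n)) m n hn hBf]
      congr 1
      rw [← ENNReal.ofReal_mul (le_of_lt (hC.r_pos n hn)),
        ← ENNReal.ofReal_mul (le_of_lt (hC.l_pos n hn)),
        ← ENNReal.ofReal_add (mul_nonneg (le_of_lt (hC.r_pos n hn)) (xp_nonneg' hC _))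
          (mul_nonneg (le_of_lt (hC.l_pos n hn)) (xp_nonneg' hC _)),
        scale_step hC.r_pos hn (hC.lr_one n hn)]

lemma key2 {b : ℝ} (hb : ∀ n, tp l r n ≤ b)
    {T : Ω → ℕ} (hT : IsBDStop X T) (hTint : ∫⁻ ω, (T ω : ℝ≥0∞) ∂P ≠ ⊤) :
    ∫⁻ ω, ENNReal.ofReal (xp l r (X (T ω) ω)) ∂P = ENNReal.ofReal (xp l r k) := by
  have hX := hC.meas
  have hP := hC.isProb
  have hb0 : 0 ≤ b := le_trans (le_of_lt (tp_pos hC.l_pos hC.r_pos 0)) (hb 0)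
  have hTm : Measurable T := hT.measurable hX
  set F : ℕ → Ω → ℝ≥0∞ := fun m ω => ENNReal.ofReal (xp l r (X (min (T ω) m) ω)) with hF
  set g : Ω → ℝ≥0∞ := fun ω => ENNReal.ofReal b * (k : ℝ≥0∞) + ENNReal.ofReal b * (T ω : ℝ≥0∞)
    with hg
  have hFm : ∀ m, Measurable (F m) := by
    intro m
    have h1 : Measurable fun ω => X (min (T ω) m) ω :=
      measurable_stopped hX (hTm.min measurable_const)
    exact Measurable.comp (f := fun ω => X (min (T ω) m) ω)
      (g := fun n : ℕ => ENNReal.ofReal (xp l r n)) measurable_from_top h1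
  have hgb : ∀ m, F m ≤ᵐ[P] g := by
    intro m
    filter_upwards [ae_goodPath hC] with ω hω
    have h1 : xp l r (X (min (T ω) m) ω) ≤ b * (k + T ω) := by
      calc xp l r (X (min (T ω) m) ω) ≤ b * (X (min (T ω) m) ω) := xp_le_mul hb _
        _ ≤ b * (k + min (T ω) m) := by
            refine mul_le_mul_of_nonneg_left ?_ hb0
            exact_mod_cast hω.le_add (min (T ω) m)
        _ ≤ b * (k + T ω) := by
            refine mul_le_mul_of_nonneg_left ?_ hb0
            have : min (T ω) m ≤ T ω := min_le_left _ _
            exact_mod_cast Nat.add_le_add_left this k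
    calc F m ω ≤ ENNReal.ofReal (b * (k + T ω)) := ENNReal.ofReal_le_ofReal h1
      _ = g ω := by
          rw [mul_add, ENNReal.ofReal_add (by positivity) (by positivity),
            ENNReal.ofReal_mul hb0, ENNReal.ofReal_mul hb0, ENNReal.ofReal_natCast,
            ENNReal.ofReal_natCast]
  have hgint : ∫⁻ ω, g ω ∂P ≠ ⊤ := by
    rw [hg]
    have hTE : Measurable fun ω => ((T ω : ℕ) : ℝ≥0∞) := measurable_from_top.comp hTm
    rw [lintegral_add_left measurable_const, lintegral_const_mul _ hTE, lintegral_const]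
    simp only [measure_univ, mul_one]
    exact ENNReal.add_ne_top.2 ⟨ENNReal.mul_ne_top ENNReal.ofReal_ne_top
        (by simp : ((k : ℕ) : ℝ≥0∞) ≠ ⊤),
      ENNReal.mul_ne_top ENNReal.ofReal_ne_top hTint⟩
  have hconv : ∀ᵐ ω ∂P, Tendsto (fun m => F m ω) atTop
      (nhds (ENNReal.ofReal (xp l r (X (T ω) ω)))) := by
    refine ae_of_all _ fun ω => ?_
    refine tendsto_const_nhds.congr' ?_
    filter_upwards [eventually_ge_atTop (T ω)] with m hm
    rw [hF]
    simp only
    rw [min_eq_left hm]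
  have := tendsto_lintegral_of_dominated_convergence g hFm hgb hgint hconv
  have h2 : (fun m => ∫⁻ ω, F m ω ∂P) = fun _ => ENNReal.ofReal (xp l r k) :=
    funext fun m => key1 hC hT m
  rw [h2] at this
  exact tendsto_nhds_unique this tendsto_const_nhds

lemma green (n : ℕ) (hn : 1 ≤ n) : (∑' m : ℕ, P {ω | X m ω = n}) ≠ ⊤ := by
  have hX := hC.meas
  have hP := hC.isProb
  haveI : NeZero n := ⟨by omega⟩
  set δ : ℝ := ∏ j ∈ Finset.range n, l (n - j) with hδdef
  have hδ : 0 < δ := Finset.prod_pos fun j hj => hC.l_pos _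
    (by rw [Finset.mem_range] at hj; omega)
  set Bs : ℕ → ℕ → Set Ω := fun m i => ⋂ j ∈ Finset.range (i+1), {ω | X (m+j) ω = n - j}
    with hBs
  have hBrepr : ∀ m i, Bs m i = ⋂ j : Fin (i+1), {ω | X (m + (j:ℕ)) ω = n - (j:ℕ)} := by
    intro m i
    ext ω
    simp only [hBs, Set.mem_iInter, Finset.mem_range, Set.mem_setOf_eq]
    exact ⟨fun h j => h j j.isLt, fun h j hj => h ⟨j, hj⟩⟩
  have hBfilt : ∀ m i, MeasurableSet[natFilt X (m+i)] (Bs m i) := by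
    intro m i
    rw [hBrepr]
    refine MeasurableSet.iInter fun j => ?_
    have hj : (j : ℕ) ≤ i := Nat.lt_succ_iff.mp j.isLt
    exact natFilt_mono (by omega : m + (j:ℕ) ≤ m + i) _
      (measurableSet_X_eq (m + (j:ℕ)) (m + (j:ℕ)) (n - (j:ℕ)) le_rfl)
  have hBmeas : ∀ m i, MeasurableSet (Bs m i) := fun m i =>
    natFilt_le hX (m+i) _ (hBfilt m i)
  have hrec : ∀ m, ∀ i, i ≤ n → P (Bs m i) =
      ENNReal.ofReal (∏ j ∈ Finset.range i, l (n - j)) * P {ω | X m ω = n} := by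
    intro m i
    induction i with
    | zero =>
      intro _
      have : Bs m 0 = {ω | X m ω = n} := by
        rw [hBs]
        ext ω
        simp
      rw [this]
      simp
    | succ i ih =>
      intro hi
      have hi' : i ≤ n := by omega
      have h1 : 1 ≤ n - i := by omega
      have hstep := hC.step_down (m+i) (n-i) h1 (Bs m i) (hBfilt m i)
      have hsub : Bs m i ⊆ {ω | X (m+i) ω = n - i} := by
        intro ω hω
        rw [hBs] at hω
        simp only [Set.mem_iInter, Finset.mem_range, Set.mem_setOf_eq] at hω
        exact hω i (by omega)
      have hAint : Bs m i ∩ {ω | X (m+i) ω = n - i} = Bs m i :=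
        Set.inter_eq_self_of_subset_left hsub
      have hBsucc : Bs m (i+1) =
          Bs m i ∩ {ω | X (m+i) ω = n - i ∧ X (m+i+1) ω = n - i - 1} := by
        rw [hBs]
        ext ω
        simp only [Set.mem_iInter, Finset.mem_range, Set.mem_setOf_eq, Set.mem_inter_iff]
        constructor
        · intro h
          exact ⟨fun j hj => h j (by omega), h i (by omega), h (i+1) (by omega)⟩
        · rintro ⟨h1', h2', h3'⟩ j hj
          rcases Nat.lt_or_ge j (i+1) with h | h
          · exact h1' j h
          · have : j = i + 1 := by omega
            subst this
            exact h3'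
      rw [hBsucc, hstep, hAint, ih hi', Finset.prod_range_succ,
        ENNReal.ofReal_mul (Finset.prod_nonneg fun j hj =>
          le_of_lt (hC.l_pos _ (by rw [Finset.mem_range] at hj; omega)))]
      ring
  have hgood0 : P {ω | ¬ GoodPath X k ω} = 0 := by
    have := ae_goodPath hC; rwa [ae_iff] at this
  obtain ⟨Nb, hNbsup, hNbmeas, hNb0⟩ := exists_measurable_superset_of_null hgood0
  set C : ℕ → Set Ω := fun m => (({ω | X m ω = n} ∩ {ω | X (m+n) ω = 0}) \ Nb) with hc
  have hCmeas : ∀ m, MeasurableSet (C m) := fun m =>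
    (((hX m (MeasurableSet.singleton n)).inter
      (hX (m+n) (MeasurableSet.singleton 0)))).diff hNbmeas
  have hCge : ∀ m, ENNReal.ofReal δ * P {ω | X m ω = n} ≤ P (C m) := by
    intro m
    rw [hc]
    simp only
    rw [measure_diff_null hNb0]
    rw [← hrec m n le_rfl]
    refine measure_mono fun ω hω => ?_
    rw [hBs] at hω
    simp only [Set.mem_iInter, Finset.mem_range, Set.mem_setOf_eq] at hω
    refine ⟨by simpa using hω 0 (by omega), ?_⟩
    have := hω n (by omega)
    simpa using this
  have hCdisj : ∀ m m', m + n ≤ m' → Disjoint (C m) (C m') := by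
    intro m m' hmm'
    rw [Set.disjoint_left]
    rintro ω ⟨⟨-, h2⟩, h3⟩ ⟨⟨h4, -⟩, -⟩
    have hgd : GoodPath X k ω := by
      by_contra hcon
      exact h3 (hNbsup hcon)
    have : X m' ω = 0 := hgd.absorb_le hmm' h2
    rw [Set.mem_setOf_eq] at h4
    omega
  have hsum1 : ∀ j : Fin n, (∑' q : ℕ, P (C (q * n + j))) ≤ 1 := by
    intro j
    have hd : Pairwise (Function.onFun Disjoint fun q : ℕ => C (q * n + j)) := by
      intro q q' hqq'
      simp only [Function.onFun]
      rcases Nat.lt_or_ge q q' with h | h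
      · exact hCdisj _ _ (by nlinarith [j.isLt])
      · have h' : q' < q := by omega
        exact (hCdisj _ _ (by nlinarith [j.isLt])).symm
    rw [← measure_iUnion hd fun q => hCmeas _]
    exact prob_le_one
  have htot : (∑' m : ℕ, P (C m)) ≤ (n : ℝ≥0∞) := by
    rw [← Equiv.tsum_eq (Nat.divModEquiv n).symm (fun m => P (C m))]
    have hform : ∀ p : ℕ × Fin n, (Nat.divModEquiv n).symm p = p.1 * n + p.2 := fun p => rfl
    calc (∑' p : ℕ × Fin n, P (C ((Nat.divModEquiv n).symm p)))
        = ∑' (q : ℕ) (j : Fin n), P (C (q * n + j)) := by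
          rw [← ENNReal.tsum_prod]
          exact tsum_congr fun p => by rw [hform]
      _ = ∑' (j : Fin n) (q : ℕ), P (C (q * n + j)) := ENNReal.tsum_comm
      _ ≤ ∑' (j : Fin n), 1 := Summable.tsum_le_tsum hsum1 ENNReal.summable ENNReal.summable
      _ = (n : ℝ≥0∞) := by
          rw [tsum_fintype]
          simp
  intro hcon
  have : ENNReal.ofReal δ * (∑' m : ℕ, P {ω | X m ω = n}) ≤ (n : ℝ≥0∞) := by
    rw [← ENNReal.tsum_mul_left]
    exact le_trans (Summable.tsum_le_tsum hCge ENNReal.summable ENNReal.summable) htot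
  rw [hcon, ENNReal.mul_top (by simp [ENNReal.ofReal_eq_zero, hδ, not_le])] at this
  exact (by simp : ¬ (⊤ : ℝ≥0∞) ≤ (n : ℝ≥0∞)) this

lemma finite_visits : ∀ᵐ ω ∂P, ∀ n, 1 ≤ n → {m | X m ω = n}.Finite := by
  have hX := hC.meas
  rw [ae_all_iff]
  intro n
  by_cases hn : 1 ≤ n
  swap
  · exact ae_of_all _ fun ω h => absurd h hn
  have hms : ∀ m : ℕ, MeasurableSet {ω' | X m ω' = n} := fun m =>
    hX m (MeasurableSet.singleton n)
  have hindm : ∀ m : ℕ, Measurable fun ω =>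
      Set.indicator {ω' | X m ω' = n} (fun _ => (1:ℝ≥0∞)) ω := fun m =>
    measurable_const.indicator (hms m)
  have hfin : ∫⁻ ω, (∑' m : ℕ, Set.indicator {ω' | X m ω' = n} (fun _ => (1:ℝ≥0∞)) ω) ∂P ≠ ⊤ := by
    rw [lintegral_tsum fun m => (hindm m).aemeasurable]
    have : ∀ m : ℕ, ∫⁻ ω, Set.indicator {ω' | X m ω' = n} (fun _ => (1:ℝ≥0∞)) ω ∂P
        = P {ω | X m ω = n} := fun m => by
      rw [lintegral_indicator_const (hms m), one_mul]
    rw [tsum_congr this]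
    exact green hC n hn
  have hmeas : Measurable fun ω =>
      (∑' m : ℕ, Set.indicator {ω' | X m ω' = n} (fun _ => (1:ℝ≥0∞)) ω) :=
    Measurable.ennreal_tsum hindm
  filter_upwards [ae_lt_top hmeas hfin] with ω hω
  intro _
  by_contra hinf
  rw [← Set.not_infinite, not_not] at hinf
  have htop : (∑' m : ℕ, Set.indicator {ω' | X m ω' = n} (fun _ => (1:ℝ≥0∞)) ω) = ⊤ := by
    have h1 : ∀ m : ℕ, Set.indicator {ω' | X m ω' = n} (fun _ => (1:ℝ≥0∞)) ω
        = Set.indicator {m' | X m' ω = n} (fun _ => (1:ℝ≥0∞)) m := by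
      intro m
      simp only [Set.indicator_apply, Set.mem_setOf_eq]
    rw [tsum_congr h1, ← _root_.tsum_subtype]
    haveI := hinf.to_subtype
    exact ENNReal.tsum_const_eq_top_of_ne_zero one_ne_zero
  rw [htop] at hω
  exact absurd hω (lt_irrefl ⊤)

end Key

lemma Gd_mono' {l r : ℕ → ℝ} {c : ℝ} {n N : ℕ} (h : n ≤ N) : Gd l r c n ≤ Gd l r c N :=
  Finset.sum_le_sum_of_subset_of_nonneg (Finset.range_subset_range.2 h)
    (fun i _ _ => abs_nonneg _)

lemma hit0_finite_val {Ω : Type*} {X : ℕ → Ω → ℕ} {ω : Ω} {M : ℕ}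
    (h : hit0 X ω = (M : ℕ∞)) : X M ω = 0 := by
  unfold hit0 hitTime at h
  by_cases hne : ∃ j, X j ω = 0
  · set j0 := Nat.find hne with hj0
    have h1 : sInf ((fun m : ℕ => (m : ℕ∞)) '' {m | X m ω ∈ ({0} : Set ℕ)}) = (j0 : ℕ∞) := by
      apply le_antisymm
      · exact sInf_le ⟨j0, Nat.find_spec hne, rfl⟩
      · refine le_sInf ?_
        rintro e ⟨m, hm, rfl⟩
        show (j0 : ℕ∞) ≤ (m : ℕ∞)
        exact_mod_cast Nat.find_min' hne hm
    rw [h] at h1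
    have h2 : M = j0 := by exact_mod_cast h1
    rw [h2]
    exact Nat.find_spec hne
  · exfalso
    have hempty : ((fun m : ℕ => (m : ℕ∞)) '' {m | X m ω ∈ ({0} : Set ℕ)}) = ∅ := by
      rw [Set.image_eq_empty]
      ext m
      simp only [Set.mem_setOf_eq, Set.mem_singleton_iff, Set.mem_empty_iff_false, iff_false]
      exact fun hc => hne ⟨m, hc⟩
    rw [hempty, sInf_empty] at h
    exact (by simp : ((⊤ : ℕ∞) ≠ (M : ℕ∞))) h



/-- If `Σ_{n=1}^∞ |1 - l_n/r_n| < ∞`, then for any non-decreasing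
sequence of stopping times `T_m` with `E[T_m] < ∞` and `T_m → T_∂` a.s., the limit
`lim_m E[X_{T_m}]` exists and lies in `(0,∞)`. -/
theorem stmt15 {Ω : Type*} [MeasurableSpace Ω] (P : Measure Ω) (X : ℕ → Ω → ℕ)
    (k : ℕ) (l r : ℕ → ℝ) (hC : IsBDChain P X k l r)
    (hsum : Summable fun n : ℕ => |1 - l (n + 1) / r (n + 1)|)
    (T : ℕ → Ω → ℕ) (hstop : ∀ m, IsBDStop X (T m))
    (hmono : ∀ ω, Monotone fun m => T m ω)
    (hint : ∀ m, ∫⁻ ω, (T m ω : ℝ≥0∞) ∂P < ⊤)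
    (hconv : ∀ᵐ ω ∂P, Tendsto (fun m => (T m ω : ℕ∞)) atTop (nhds (hit0 X ω))) :
    ∃ L : ℝ≥0∞, L ≠ 0 ∧ L ≠ ⊤ ∧
      Tendsto (fun m => ∫⁻ ω, (X (T m ω) ω : ℝ≥0∞) ∂P) atTop (nhds L) := by
  classical
  have hX := hC.meas
  have hP := hC.isProb
  have hl := hC.l_pos
  have hr := hC.r_pos
  obtain ⟨c, hc, htend⟩ := tp_tendsto hl hr hsum
  obtain ⟨a, b, ha, ha', hb'⟩ := exists_tp_bounds (tp_pos hl hr) hc htend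
  have hTm : ∀ j, Measurable (T j) := fun j => (hstop j).measurable hX
  have hXT : ∀ j, Measurable fun ω => X (T j ω) ω := fun j =>
    measurable_stopped hX (hTm j)
  have hkey : ∀ j, ∫⁻ ω, ENNReal.ofReal (xp l r (X (T j ω) ω)) ∂P
      = ENNReal.ofReal (xp l r k) := fun j => key2 hC hb' (hstop j) (hint j).ne
  have hxpk : 0 < xp l r k := by
    have h1 : (0:ℝ) < a * k := by
      have : (1:ℝ) ≤ (k:ℝ) := by exact_mod_cast hC.one_le_k
      nlinarith
    exact lt_of_lt_of_le h1 (mul_le_xp ha' k)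
  have hm0 : ∀ j, Measurable fun ω => ENNReal.ofReal (xp l r (X (T j ω) ω)) := fun j =>
    (measurable_from_top (f := fun n : ℕ => ENNReal.ofReal (xp l r n))).comp (hXT j)
  have hmc : ∀ j, Measurable fun ω => ((X (T j ω) ω : ℕ) : ℝ≥0∞) := fun j =>
    (measurable_from_top (f := fun n : ℕ => (n : ℝ≥0∞))).comp (hXT j)
  have hmG : ∀ j, Measurable fun ω => ENNReal.ofReal (Gd l r c (X (T j ω) ω)) := fun j =>
    (measurable_from_top (f := fun n : ℕ => ENNReal.ofReal (Gd l r c n))).comp (hXT j)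
  -- Step A: the probability of landing in [1, N) tends to 0
  have hA0 : ∀ N : ℕ, Tendsto
      (fun j => P {ω | 1 ≤ X (T j ω) ω ∧ X (T j ω) ω < N}) atTop (nhds 0) := by
    intro N
    have hSmeas : ∀ j, MeasurableSet {ω | 1 ≤ X (T j ω) ω ∧ X (T j ω) ω < N} := by
      intro j
      have : {ω | 1 ≤ X (T j ω) ω ∧ X (T j ω) ω < N}
          = (fun ω => X (T j ω) ω) ⁻¹' (Set.Ico 1 N) := rfl
      rw [this]
      exact hXT j measurableSet_Ico
    have hDC := tendsto_lintegral_of_dominated_convergence (μ := P)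
      (F := fun j ω => Set.indicator {ω' | 1 ≤ X (T j ω') ω' ∧ X (T j ω') ω' < N}
        (fun _ => (1:ℝ≥0∞)) ω)
      (f := fun _ => 0) (fun _ => (1:ℝ≥0∞))
      (fun j => measurable_const.indicator (hSmeas j))
      (fun j => ae_of_all _ fun ω => Set.indicator_le_self' (fun _ _ => by norm_num) ω)
      (by simp [lintegral_const, measure_univ])
      ?_
    · have heq : (fun j => ∫⁻ ω, Set.indicator {ω' | 1 ≤ X (T j ω') ω' ∧ X (T j ω') ω' < N}
          (fun _ => (1:ℝ≥0∞)) ω ∂P)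
          = fun j => P {ω | 1 ≤ X (T j ω) ω ∧ X (T j ω) ω < N} := by
        funext j
        rw [lintegral_indicator_const (hSmeas j), one_mul]
      rw [heq] at hDC
      simpa using hDC
    · filter_upwards [ae_goodPath hC, finite_visits hC, hconv] with ω hgd hfv hcv
      -- eventually T j ω is at least M whenever (M:ℕ∞) ≤ hit0 X ω
      have hev : ∀ M : ℕ, (M : ℕ∞) ≤ hit0 X ω → ∃ j0, M ≤ T j0 ω := by
        intro M hM
        by_contra hcon
        push_neg at hcon
        have hM1 : 1 ≤ M := by have := hcon 0; omega
        have hle : ∀ j, (T j ω : ℕ∞) ≤ ((M - 1 : ℕ) : ℕ∞) := fun j => by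
          have := hcon j
          exact_mod_cast (by omega : T j ω ≤ M - 1)
        have h2 : hit0 X ω ≤ ((M - 1 : ℕ) : ℕ∞) := le_of_tendsto' hcv hle
        have h3 : (M : ℕ∞) ≤ ((M - 1 : ℕ) : ℕ∞) := le_trans hM h2
        rw [Nat.cast_le] at h3
        omega
      have hstay : ∃ j0, ∀ j ≥ j0,
          ω ∉ {ω' | 1 ≤ X (T j ω') ω' ∧ X (T j ω') ω' < N} := by
        rcases hhit : hit0 X ω with _ | M
        · -- hit0 = ⊤ : finitely many visits to [1, N)
          have hV : {m | 1 ≤ X m ω ∧ X m ω < N}.Finite := by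
            refine Set.Finite.subset (Set.Finite.biUnion (Finset.Ico 1 N).finite_toSet
              (fun n hn => hfv n (Finset.mem_Ico.1 hn).1)) ?_
            intro m hm
            simp only [Set.mem_iUnion, Finset.mem_coe, Finset.mem_Ico, Set.mem_setOf_eq]
            exact ⟨X m ω, ⟨hm.1, hm.2⟩, rfl⟩
          obtain ⟨M0, hM0⟩ := hV.bddAbove
          obtain ⟨j0, hj0⟩ := hev (M0 + 1) (by rw [hhit]; exact le_top)
          refine ⟨j0, fun j hj hmem => ?_⟩
          have hTj : M0 + 1 ≤ T j ω := le_trans hj0 (hmono ω hj)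
          have : T j ω ≤ M0 := hM0 ⟨hmem.1, hmem.2⟩
          omega
        · -- hit0 = M : absorbed at 0 from time M on
          have hXM : X M ω = 0 := hit0_finite_val hhit
          obtain ⟨j0, hj0⟩ := hev M (by rw [hhit]; exact le_rfl)
          refine ⟨j0, fun j hj hmem => ?_⟩
          have hTj : M ≤ T j ω := le_trans hj0 (hmono ω hj)
          have h0 : X (T j ω) ω = 0 := hgd.absorb_le hTj hXM
          have := hmem.1
          omega
      obtain ⟨j0, hj0⟩ := hstay
      refine tendsto_const_nhds.congr' ?_
      rw [Filter.EventuallyEq, eventually_atTop]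
      exact ⟨j0, fun j hj => (Set.indicator_of_notMem (hj0 j hj) _).symm⟩
  -- Step B: expectation of the error term tends to 0
  have hE0 : Tendsto (fun j => ∫⁻ ω, ENNReal.ofReal (Gd l r c (X (T j ω) ω)) ∂P)
      atTop (nhds 0) := by
    rw [ENNReal.tendsto_atTop_zero]
    intro ε hε
    have hxEk_ne : ENNReal.ofReal (xp l r k) ≠ ⊤ := ENNReal.ofReal_ne_top
    set d : ℝ≥0∞ := ENNReal.ofReal (xp l r k) + 1 with hd
    have hd0 : d ≠ 0 := by simp [hd]
    have hdt : d ≠ ⊤ := by simp [hd, hxEk_ne]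
    set q : ℝ≥0∞ := min (ε / 2) 1 with hq
    have hq0 : q ≠ 0 := by
      exact (lt_min (ENNReal.half_pos (ne_of_gt hε)) zero_lt_one).ne' 
    have hqt : q ≠ ⊤ := by simp [hq]
    set η : ℝ := (q / d).toReal with hη'
    have hηpos : 0 < η := ENNReal.toReal_pos
      (by rw [Ne, ENNReal.div_eq_zero_iff]; push_neg; exact ⟨hq0, hdt⟩)
      (by rw [Ne, ENNReal.div_eq_top]; push_neg; exact ⟨fun _ => hd0, fun h => absurd h hqt⟩)
    have hηeq : ENNReal.ofReal η = q / d := ENNReal.ofReal_toReal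
      (by rw [Ne, ENNReal.div_eq_top]; push_neg; exact ⟨fun _ => hd0, fun h => absurd h hqt⟩)
    obtain ⟨N, hN⟩ := Gd_small hc ha ha' htend η hηpos
    -- pointwise bound
    have hptb : ∀ j ω, ENNReal.ofReal (Gd l r c (X (T j ω) ω)) ≤
        ENNReal.ofReal η * ENNReal.ofReal (xp l r (X (T j ω) ω)) +
        Set.indicator {ω' | 1 ≤ X (T j ω') ω' ∧ X (T j ω') ω' < N}
          (fun _ => ENNReal.ofReal (Gd l r c N)) ω := by
      intro j ω
      set n := X (T j ω) ω with hn
      by_cases hω : ω ∈ {ω' | 1 ≤ X (T j ω') ω' ∧ X (T j ω') ω' < N}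
      · rw [Set.indicator_of_mem hω]
        have h1 : n < N := hω.2
        calc ENNReal.ofReal (Gd l r c n) ≤ ENNReal.ofReal (Gd l r c N) :=
              ENNReal.ofReal_le_ofReal (Gd_mono' (by omega))
          _ ≤ _ := self_le_add_left _ _
      · rw [Set.indicator_of_notMem hω, add_zero]
        have hnN : n = 0 ∨ N ≤ n := by
          simp only [Set.mem_setOf_eq, not_and, not_lt] at hω
          omega
        rcases hnN with h0 | hNn
        · rw [h0]
          have : Gd l r c 0 = 0 := by simp [Gd]
          rw [this]
          simp
        · calc ENNReal.ofReal (Gd l r c n) ≤ ENNReal.ofReal (η * xp l r n) :=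
              ENNReal.ofReal_le_ofReal (hN n hNn)
            _ = ENNReal.ofReal η * ENNReal.ofReal (xp l r n) :=
              ENNReal.ofReal_mul (le_of_lt hηpos)
    have hSmeas : ∀ j, MeasurableSet {ω' | 1 ≤ X (T j ω') ω' ∧ X (T j ω') ω' < N} := by
      intro j
      have : {ω' | 1 ≤ X (T j ω') ω' ∧ X (T j ω') ω' < N}
          = (fun ω => X (T j ω) ω) ⁻¹' (Set.Ico 1 N) := rfl
      rw [this]
      exact hXT j measurableSet_Ico
    have hbound : ∀ j, ∫⁻ ω, ENNReal.ofReal (Gd l r c (X (T j ω) ω)) ∂P ≤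
        ε / 2 + ENNReal.ofReal (Gd l r c N) *
          P {ω' | 1 ≤ X (T j ω') ω' ∧ X (T j ω') ω' < N} := by
      intro j
      have hm1 : Measurable fun ω =>
          ENNReal.ofReal η * ENNReal.ofReal (xp l r (X (T j ω) ω)) :=
        (hm0 j).const_mul _
      calc ∫⁻ ω, ENNReal.ofReal (Gd l r c (X (T j ω) ω)) ∂P
          ≤ ∫⁻ ω, (ENNReal.ofReal η * ENNReal.ofReal (xp l r (X (T j ω) ω)) +
            Set.indicator {ω' | 1 ≤ X (T j ω') ω' ∧ X (T j ω') ω' < N}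
              (fun _ => ENNReal.ofReal (Gd l r c N)) ω) ∂P :=
            lintegral_mono (hptb j)
        _ = ENNReal.ofReal η * ENNReal.ofReal (xp l r k) +
            ENNReal.ofReal (Gd l r c N) *
              P {ω' | 1 ≤ X (T j ω') ω' ∧ X (T j ω') ω' < N} := by
            rw [lintegral_add_left hm1, lintegral_const_mul _ (hm0 j), hkey j,
              lintegral_indicator_const (hSmeas j)]
        _ ≤ ε / 2 + ENNReal.ofReal (Gd l r c N) *
              P {ω' | 1 ≤ X (T j ω') ω' ∧ X (T j ω') ω' < N} := by
            refine add_le_add_left ?_ _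
            rw [hηeq]
            calc q / d * ENNReal.ofReal (xp l r k) ≤ q / d * d := by
                  refine mul_le_mul_right ?_ _
                  rw [hd]
                  exact le_self_add
              _ = q := ENNReal.div_mul_cancel hd0 hdt
              _ ≤ ε / 2 := min_le_left _ _
    have htail : ∀ᶠ j in atTop, ENNReal.ofReal (Gd l r c N) *
        P {ω' | 1 ≤ X (T j ω') ω' ∧ X (T j ω') ω' < N} ≤ ε / 2 := by
      have h1 : Tendsto (fun j => ENNReal.ofReal (Gd l r c N) *
          P {ω' | 1 ≤ X (T j ω') ω' ∧ X (T j ω') ω' < N}) atTop (nhds 0) := by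
        have := ENNReal.Tendsto.const_mul (a := ENNReal.ofReal (Gd l r c N)) (hA0 N)
          (Or.inr ENNReal.ofReal_ne_top)
        simpa using this
      rw [ENNReal.tendsto_atTop_zero] at h1
      obtain ⟨j1, hj1⟩ := h1 (ε / 2) (ENNReal.half_pos (ne_of_gt hε))
      exact eventually_atTop.2 ⟨j1, hj1⟩
    rw [← eventually_atTop]
    filter_upwards [htail] with j hj
    calc ∫⁻ ω, ENNReal.ofReal (Gd l r c (X (T j ω) ω)) ∂P
        ≤ ε / 2 + ENNReal.ofReal (Gd l r c N) *
          P {ω' | 1 ≤ X (T j ω') ω' ∧ X (T j ω') ω' < N} := hbound j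
      _ ≤ ε / 2 + ε / 2 := add_le_add_right hj _
      _ = ε := ENNReal.add_halves ε
  -- Step C: squeeze
  set I : ℕ → ℝ≥0∞ := fun j => ∫⁻ ω, (X (T j ω) ω : ℝ≥0∞) ∂P with hI
  set E : ℕ → ℝ≥0∞ := fun j => ∫⁻ ω, ENNReal.ofReal (Gd l r c (X (T j ω) ω)) ∂P with hEd
  have hub : ∀ j, ENNReal.ofReal (xp l r k) ≤ ENNReal.ofReal c * I j + E j := by
    intro j
    rw [← hkey j]
    have hm1 : Measurable fun ω => ENNReal.ofReal c * (X (T j ω) ω : ℝ≥0∞) :=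
      (hmc j).const_mul _
    calc ∫⁻ ω, ENNReal.ofReal (xp l r (X (T j ω) ω)) ∂P
        ≤ ∫⁻ ω, (ENNReal.ofReal c * (X (T j ω) ω : ℝ≥0∞) +
          ENNReal.ofReal (Gd l r c (X (T j ω) ω))) ∂P := by
          refine lintegral_mono fun ω => ?_
          set n := X (T j ω) ω
          have h1 : xp l r n ≤ c * n + Gd l r c n := by
            have := abs_sub_xp_le (l := l) (r := r) (c := c) n
            rw [abs_le] at this
            linarith [this.1]
          calc ENNReal.ofReal (xp l r n) ≤ ENNReal.ofReal (c * n + Gd l r c n) :=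
                ENNReal.ofReal_le_ofReal h1
            _ = ENNReal.ofReal c * (n : ℝ≥0∞) + ENNReal.ofReal (Gd l r c n) := by
                rw [ENNReal.ofReal_add (by positivity) (Gd_nonneg n),
                  ENNReal.ofReal_mul (le_of_lt hc), ENNReal.ofReal_natCast]
      _ = ENNReal.ofReal c * I j + E j := by
          rw [lintegral_add_left hm1, lintegral_const_mul _ (hmc j)]
  have hlb : ∀ j, ENNReal.ofReal c * I j ≤ ENNReal.ofReal (xp l r k) + E j := by
    intro j
    rw [← hkey j]
    have hm1 : Measurable fun ω => ENNReal.ofReal (xp l r (X (T j ω) ω)) := hm0 j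
    calc ENNReal.ofReal c * I j
        = ∫⁻ ω, ENNReal.ofReal c * (X (T j ω) ω : ℝ≥0∞) ∂P := by
          rw [hI]
          simp only
          rw [lintegral_const_mul _ (hmc j)]
      _ ≤ ∫⁻ ω, (ENNReal.ofReal (xp l r (X (T j ω) ω)) +
          ENNReal.ofReal (Gd l r c (X (T j ω) ω))) ∂P := by
          refine lintegral_mono fun ω => ?_
          set n := X (T j ω) ω
          have h1 : c * n ≤ xp l r n + Gd l r c n := by
            have := abs_sub_xp_le (l := l) (r := r) (c := c) n
            rw [abs_le] at this
            linarith [this.2]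
          calc ENNReal.ofReal c * (n : ℝ≥0∞) = ENNReal.ofReal (c * n) := by
                rw [ENNReal.ofReal_mul (le_of_lt hc), ENNReal.ofReal_natCast]
            _ ≤ ENNReal.ofReal (xp l r n + Gd l r c n) := ENNReal.ofReal_le_ofReal h1
            _ = ENNReal.ofReal (xp l r n) + ENNReal.ofReal (Gd l r c n) :=
                ENNReal.ofReal_add (xp_nonneg' hC n) (Gd_nonneg n)
      _ = ∫⁻ ω, ENNReal.ofReal (xp l r (X (T j ω) ω)) ∂P + E j := by
          rw [lintegral_add_left hm1]
  have hlow : Tendsto (fun j => ENNReal.ofReal (xp l r k) - E j) atTop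
      (nhds (ENNReal.ofReal (xp l r k))) := by
    have := ENNReal.Tendsto.sub (tendsto_const_nhds
      (x := ENNReal.ofReal (xp l r k)) (f := atTop)) hE0 (Or.inl ENNReal.ofReal_ne_top)
    simpa using this
  have hhigh : Tendsto (fun j => ENNReal.ofReal (xp l r k) + E j) atTop
      (nhds (ENNReal.ofReal (xp l r k))) := by
    have := Tendsto.add (tendsto_const_nhds
      (x := ENNReal.ofReal (xp l r k)) (f := atTop)) hE0
    simpa using this
  have htendc : Tendsto (fun j => ENNReal.ofReal c * I j) atTop
      (nhds (ENNReal.ofReal (xp l r k))) := by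
    refine tendsto_of_tendsto_of_tendsto_of_le_of_le hlow hhigh
      (fun j => tsub_le_iff_right.2 (hub j)) hlb
  have hc0 : ENNReal.ofReal c ≠ 0 := by
    rw [Ne, ENNReal.ofReal_eq_zero]
    exact not_le.2 hc
  have hct : ENNReal.ofReal c ≠ ⊤ := ENNReal.ofReal_ne_top
  refine ⟨ENNReal.ofReal (xp l r k) / ENNReal.ofReal c, ?_, ?_, ?_⟩
  · rw [Ne, ENNReal.div_eq_zero_iff]
    push_neg
    constructor
    · rw [Ne, ENNReal.ofReal_eq_zero]
      exact not_le.2 hxpk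
    · exact hct
  · rw [Ne, ENNReal.div_eq_top]
    push_neg
    exact ⟨fun _ => hc0, fun h => absurd h ENNReal.ofReal_ne_top⟩
  · have hdiv := ENNReal.Tendsto.div_const htendc (Or.inr hc0)
    have heq : (fun j => ENNReal.ofReal c * I j / ENNReal.ofReal c) = I := by
      funext j
      rw [mul_comm, mul_div_assoc, ENNReal.div_self hc0 hct, mul_one]
    rw [heq] at hdiv
    exact hdiv
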